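/- arXiv:1702.01883 — 2 statements merged into one kernel-verified Lean document; each statement's English description precedes it below -/
import Mathlib

section
/- Let G be a finite group and H a normal subgroup of G of prime index q. If θ is an irreducible complex character of H that is invariant in G, i.e. I_G(θ) = G, then θ is extendible to G: there exists an irreducible complex character χ of G with Res_H^G χ = θ. -/
open scoped BigOperators ComplexOrder

noncomputable section

/-- `χ : G → ℂ` is an irreducible character of `G` if it is the character of some
irreducible (simple) finite-dimensional complex representation of `G`. -/
def IsIrreducibleCharacter (G : Type) [Group G] (χ : G → ℂ) : Prop :=
  ∃ V : FDRep ℂ G, CategoryTheory.Simple V ∧ χ = V.character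

open Classical in
/-- Extension of a class function on a subgroup `H` by zero to all of `G`. -/
def extChar {G : Type} [Group G] (H : Subgroup G) (θ : ↥H → ℂ) : G → ℂ :=
  fun x => if hx : x ∈ H then θ ⟨x, hx⟩ else 0

theorem extChar_apply_of_mem {G : Type} [Group G] {H : Subgroup G} (θ : ↥H → ℂ) {x : G}
    (hx : x ∈ H) : extChar H θ x = θ ⟨x, hx⟩ := dif_pos hx

/-- The conjugate `θ^g` of a character `θ` of a (normal) subgroup `H`, `θ^g(h) = θ(g h g⁻¹)`. -/
def conjChar {G : Type} [Group G] (H : Subgroup G) (θ : ↥H → ℂ) (g : G) : ↥H → ℂ :=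
  fun h => extChar H θ (g * (h : G) * g⁻¹)

/-- The inertia group `I_G(θ) = {g ∈ G : θ^g = θ}` of a character of a normal subgroup. -/
def inertia {G : Type} [Group G] (H : Subgroup G) (hH : H.Normal) (θ : ↥H → ℂ) :
    Subgroup G where
  carrier := {g | conjChar H θ g = θ}
  one_mem' := by
    funext h
    show extChar H θ (1 * (h : G) * 1⁻¹) = θ h
    rw [show (1 : G) * (h : G) * 1⁻¹ = (h : G) by group, extChar_apply_of_mem θ h.2]
  mul_mem' := by
    intro a b ha hb
    funext h
    have hbm : b * (h : G) * b⁻¹ ∈ H := hH.conj_mem _ h.2 b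
    have h1 : extChar H θ (a * (b * (h : G) * b⁻¹) * a⁻¹) = θ ⟨b * (h : G) * b⁻¹, hbm⟩ :=
      congrFun ha (⟨b * (h : G) * b⁻¹, hbm⟩ : ↥H)
    have h2 : extChar H θ (b * (h : G) * b⁻¹) = θ h := congrFun hb h
    show extChar H θ (a * b * (h : G) * (a * b)⁻¹) = θ h
    rw [show a * b * (h : G) * (a * b)⁻¹ = a * (b * (h : G) * b⁻¹) * a⁻¹ by group, h1]
    rw [extChar_apply_of_mem θ hbm] at h2
    exact h2
  inv_mem' := by
    intro a ha
    funext h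
    have ham : a⁻¹ * (h : G) * a⁻¹⁻¹ ∈ H := hH.conj_mem _ h.2 a⁻¹
    have h1 : extChar H θ (a * (a⁻¹ * (h : G) * a⁻¹⁻¹) * a⁻¹) = θ ⟨_, ham⟩ :=
      congrFun ha (⟨a⁻¹ * (h : G) * a⁻¹⁻¹, ham⟩ : ↥H)
    rw [show a * (a⁻¹ * (h : G) * a⁻¹⁻¹) * a⁻¹ = (h : G) by group,
      extChar_apply_of_mem θ h.2] at h1
    show extChar H θ (a⁻¹ * (h : G) * a⁻¹⁻¹) = θ h
    rw [extChar_apply_of_mem θ ham, ← h1]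

/-- The induced character `Ind_H^G θ (g) = |H|⁻¹ ∑_{x ∈ G} θ°(x⁻¹ g x)`. -/
def inducedChar {G : Type} [Group G] (H : Subgroup G) (θ : ↥H → ℂ) : G → ℂ :=
  fun g => (Nat.card H : ℂ)⁻¹ * ∑ᶠ x : G, extChar H θ (x⁻¹ * g * x)

/-- The usual inner product of class functions, `⟨φ, ψ⟩ = |G|⁻¹ ∑_{g} φ(g) conj(ψ(g))`. -/
def charInner (G : Type) [Group G] (φ ψ : G → ℂ) : ℂ :=
  (Nat.card G : ℂ)⁻¹ * ∑ᶠ g : G, φ g * (starRingEnd ℂ) (ψ g)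

end

namespace GalAux
open CategoryTheory
noncomputable section
variable {k : Type} [Field k] {M : Type} [Monoid M]


def Invt (W : FDRep k M) (p : Submodule k W) : Prop := ∀ g : M, ∀ x ∈ p, W.ρ g x ∈ p

def subRep (W : FDRep k M) (p : Submodule k W) (hp : Invt W p) : Representation k M p where
  toFun g := (W.ρ g).restrict (fun x hx => hp g x hx)
  map_one' := by ext x; simp [LinearMap.restrict_apply]
  map_mul' g g' := by ext x; simp [LinearMap.restrict_apply]

def inclHom (W : FDRep k M) (p : Submodule k W) (hp : Invt W p) : FDRep.of (subRep W p hp) ⟶ W where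
  hom := FGModuleCat.ofHom p.subtype
  comm g := by ext x; rfl

lemma mono_inclHom (W : FDRep k M) (p : Submodule k W) (hp : Invt W p) : Mono (inclHom W p hp) := by
  constructor
  intro Z g h hgh
  ext x
  have := congrArg Action.Hom.hom hgh
  have h2 := congrFun (congrArg (fun (f : Z.V ⟶ W.V) => (f : Z → W)) this) x
  simp [inclHom] at h2
  exact congrArg Subtype.val h2

lemma hom_eq_zero_iff {X Y : FDRep k M} (f : X ⟶ Y) : f = 0 ↔ f.hom = 0 := by
  constructor
  · rintro rfl; rfl
  · intro h; ext x; exact congrFun (congrArg (fun (f : X.V ⟶ Y.V) => (f : X → Y)) h) x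

lemma nontrivial_of_simple (W : FDRep k M) [Simple W] : Nontrivial W := by
  by_contra h
  rw [not_nontrivial_iff_subsingleton] at h
  refine id_nonzero W ?_
  ext x
  exact @Subsingleton.elim _ h _ _

lemma invt_trivial_of_simple (W : FDRep k M) [Simple W] (p : Submodule k W) (hp : Invt W p) :
    p = ⊥ ∨ p = ⊤ := by
  by_cases hb : p = ⊥
  · exact Or.inl hb
  right
  have : Mono (inclHom W p hp) := mono_inclHom W p hp
  have hne : inclHom W p hp ≠ 0 := by
    rw [Ne, hom_eq_zero_iff]
    intro h0
    apply hb
    rw [Submodule.eq_bot_iff]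
    intro x hx
    have := congrFun (congrArg (fun (f : (FDRep.of (subRep W p hp)).V ⟶ W.V) => (f : p → W)) h0) ⟨x, hx⟩
    simp [inclHom] at this
    exact this.trans rfl
  have hiso : IsIso (inclHom W p hp) := (Simple.mono_isIso_iff_nonzero _).mpr hne
  rw [Submodule.eq_top_iff']
  intro w
  have h1 : inv (inclHom W p hp) ≫ inclHom W p hp = 𝟙 W := IsIso.inv_hom_id _
  have h1' : (inv (inclHom W p hp)).hom ≫ (inclHom W p hp).hom = 𝟙 W.V := by
    rw [← Action.comp_hom, h1]; rfl
  obtain ⟨y, hy⟩ : ∃ y : p, (y : W) = w := by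
    refine ⟨(inv (inclHom W p hp)).hom w, ?_⟩
    simpa [inclHom] using congrFun (congrArg (fun (f : W.V ⟶ W.V) => (f : W → W)) h1') w
  rw [← hy]
  exact y.2

lemma simple_of_invt (W : FDRep k M) (hnt : Nontrivial W)
    (h : ∀ p : Submodule k W, Invt W p → p = ⊥ ∨ p = ⊤) : Simple W := by
  constructor
  intro Y f hm
  constructor
  · intro hiso hf0
    subst hf0
    have h1 : inv (0 : Y ⟶ W) ≫ (0 : Y ⟶ W) = 𝟙 W := IsIso.inv_hom_id _
    rw [Limits.comp_zero] at h1
    replace h1 := h1.symm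
    obtain ⟨x, y, hxy⟩ := hnt
    apply hxy
    have h2 := congrFun (congrArg (fun (f : W.V ⟶ W.V) => (f : W → W)) (congrArg Action.Hom.hom h1)) x
    have h3 := congrFun (congrArg (fun (f : W.V ⟶ W.V) => (f : W → W)) (congrArg Action.Hom.hom h1)) y
    calc x = (0 : W.V ⟶ W.V) x := h2
    _ = (0 : W.V ⟶ W.V) y := rfl
    _ = y := h3.symm
  · intro hf0
    set φ : Y →ₗ[k] W := f.hom.hom.hom with hφ
    have hcomm : ∀ (g : M) (y : Y), φ (Y.ρ g y) = W.ρ g (φ y) := by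
      intro g y
      exact congrFun (congrArg (fun (f : Y.V ⟶ W.V) => (f : Y → W)) (f.comm g)) y
    -- injective
    have hker : ∀ g : M, ∀ x ∈ LinearMap.ker φ, Y.ρ g x ∈ LinearMap.ker φ := by
      intro g x hx
      rw [LinearMap.mem_ker] at hx ⊢
      rw [hcomm, hx, map_zero]
    have hinj : Function.Injective φ := by
      rw [← LinearMap.ker_eq_bot]
      by_contra hk
      have hι : inclHom Y _ hker ≫ f = 0 := by
        ext x
        exact x.2
      rw [← Limits.zero_comp (f := f)] at hι
      have := hm.right_cancellation _ _ hι
      rw [hom_eq_zero_iff] at this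
      apply hk
      rw [Submodule.eq_bot_iff]
      intro x hx
      have h5 := congrFun (congrArg (fun (g : (FDRep.of (subRep Y _ hker)).V ⟶ Y.V) => (g : _ → Y)) this) ⟨x, hx⟩
      simp [inclHom] at h5
      exact h5.trans rfl
    -- surjective
    have hrng : Invt W (LinearMap.range φ) := by
      rintro g x ⟨y, rfl⟩
      exact ⟨Y.ρ g y, hcomm g y⟩
    have hsurj : Function.Surjective φ := by
      rw [← LinearMap.range_eq_top]
      rcases h _ hrng with hb | ht
      · exfalso
        apply hf0
        rw [hom_eq_zero_iff]
        ext y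
        have : φ y ∈ LinearMap.range φ := ⟨y, rfl⟩
        rw [hb] at this
        simpa using this
      · exact ht
    set e := LinearEquiv.ofBijective φ ⟨hinj, hsurj⟩ with he
    have hes : ∀ y : Y, e y = φ y := fun _ => rfl
    refine ⟨⟨⟨(ConcreteCategory.ofHom (e.symm : W →ₗ[k] Y) : W.V ⟶ Y.V), ?_⟩, ?_, ?_⟩⟩
    · intro g
      ext w
      show e.symm (W.ρ g w) = Y.ρ g (e.symm w)
      apply hinj
      rw [← hes (e.symm (W.ρ g w)), e.apply_symm_apply, hcomm, ← hes (e.symm w),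
        e.apply_symm_apply]
    · ext y
      show e.symm (φ y) = y
      rw [← hes, e.symm_apply_apply]
    · ext w
      show φ (e.symm w) = w
      rw [← hes, e.apply_symm_apply]


variable [IsAlgClosed k]


lemma scalar_of_commute (W : FDRep k M) (hnt : Nontrivial W)
    (htriv : ∀ p : Submodule k W, Invt W p → p = ⊥ ∨ p = ⊤)
    (S : W →ₗ[k] W) (hS : ∀ g : M, S ∘ₗ W.ρ g = W.ρ g ∘ₗ S) :
    ∃ c : k, S = c • LinearMap.id := by
  haveI : Nontrivial ((W : Type)) := hnt
  obtain ⟨c, hc⟩ := Module.End.exists_eigenvalue (S : Module.End k W)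
  refine ⟨c, ?_⟩
  have hp : Invt W (Module.End.eigenspace (S : Module.End k W) c) := by
    intro g x hx
    rw [Module.End.mem_eigenspace_iff] at hx ⊢
    have := congrFun (congrArg (fun (f : W →ₗ[k] W) => (f : W → W)) (hS g)) x
    simp only [LinearMap.coe_comp, Function.comp_apply] at this
    rw [show (S : Module.End k W) (W.ρ g x) = S (W.ρ g x) from rfl, this, hx, map_smul]
  rcases htriv _ hp with hb | ht
  · exact absurd hb hc
  · ext x
    have hx : x ∈ Module.End.eigenspace (S : Module.End k W) c := ht ▸ Submodule.mem_top
    rw [Module.End.mem_eigenspace_iff] at hx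
    simpa using hx


end
end GalAux

open CategoryTheory

set_option maxHeartbeats 3200000

/-- **Gallagher's extension theorem.** If `H ⊴ G` has prime index `q` and `θ ∈ Irr(H)`
is invariant in `G` (i.e. `I_G(θ) = G`), then `θ` extends to an irreducible character
of `G`. -/
theorem exists_extension_of_invariant
    {G : Type} [Group G] [Fintype G] (H : Subgroup G) (hH : H.Normal)
    (q : ℕ) (hq : q.Prime) (hind : H.index = q)
    (θ : ↥H → ℂ) (hθ : IsIrreducibleCharacter ↥H θ)
    (hinv : inertia H hH θ = ⊤) :
    ∃ χ : G → ℂ, IsIrreducibleCharacter G χ ∧ (fun h : ↥H => χ (h : G)) = θ := by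
  classical
  haveI := hH
  obtain ⟨V, hVs, hVθ⟩ := hθ
  haveI := hVs
  -- Step 1 : an element outside H
  have hHne : H ≠ ⊤ := by
    intro h
    rw [h, Subgroup.index_top] at hind
    exact hq.ne_one hind.symm
  obtain ⟨g₀, hg₀⟩ : ∃ g : G, g ∉ H := by
    by_contra hcon
    push_neg at hcon
    exact hHne ((Subgroup.eq_top_iff' _).mpr hcon)
  -- Step 2 : order of g₀ in the quotient
  set t : G ⧸ H := (g₀ : G ⧸ H) with ht
  have hcardQ : Nat.card (G ⧸ H) = q := by rw [← hind]; rfl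
  have ht1 : t ≠ 1 := by
    simpa [ht, QuotientGroup.eq_one_iff] using hg₀
  have horder : orderOf t = q := by
    have hdvd : orderOf t ∣ q := hcardQ ▸ orderOf_dvd_natCard t
    rcases (Nat.Prime.eq_one_or_self_of_dvd hq _ hdvd) with h1 | h1
    · exact absurd (orderOf_eq_one_iff.mp h1) ht1
    · exact h1
  -- Step 3 : membership criterion
  have hmem : ∀ m : ℤ, g₀ ^ m ∈ H ↔ (q : ℤ) ∣ m := by
    intro m
    have h1 : ((g₀ ^ m : G) : G ⧸ H) = t ^ m := by
      rw [ht]; exact (QuotientGroup.mk_zpow H g₀ m)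
    rw [← QuotientGroup.eq_one_iff, h1, ← orderOf_dvd_iff_zpow_eq_one, horder]
  -- Step 4 : coset decomposition
  have hdecomp : ∀ x : G, ∃ i : ℤ, (g₀ ^ i)⁻¹ * x ∈ H := by
    intro x
    have hzp : Subgroup.zpowers t = ⊤ := by
      apply Subgroup.eq_top_of_card_eq
      rw [Nat.card_zpowers, horder, hcardQ]
    have : (x : G ⧸ H) ∈ Subgroup.zpowers t := hzp ▸ Subgroup.mem_top _
    obtain ⟨i, hi⟩ := this
    refine ⟨i, ?_⟩
    rw [← QuotientGroup.eq_one_iff]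
    have h2 : ((g₀ ^ i : G) : G ⧸ H) = (x : G ⧸ H) := by
      rw [QuotientGroup.mk_zpow H g₀ i]; exact hi
    simp [← h2]
  -- Step 5 : the conjugate representation and an intertwiner
  set φ := (MulAut.conjNormal g₀ : MulAut ↥H) with hφ
  have hφcoe : ∀ h : ↥H, (φ h : G) = g₀ * h * g₀⁻¹ := fun h => MulAut.conjNormal_apply g₀ h
  have hθφ : ∀ h : ↥H, θ (φ h) = θ h := by
    intro h
    have hg₀i : conjChar H θ g₀ = θ := by
      have : g₀ ∈ inertia H hH θ := hinv ▸ Subgroup.mem_top g₀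
      exact this
    have h1 := congrFun hg₀i h
    have hm : g₀ * (h : G) * g₀⁻¹ ∈ H := hH.conj_mem _ h.2 g₀
    rw [show conjChar H θ g₀ h = extChar H θ (g₀ * (h : G) * g₀⁻¹) from rfl,
      extChar_apply_of_mem θ hm] at h1
    rw [show φ h = (⟨g₀ * (h : G) * g₀⁻¹, hm⟩ : ↥H) from Subtype.ext (hφcoe h), h1]
  set V' : FDRep ℂ ↥H := FDRep.of (V.ρ.comp φ.toMonoidHom) with hV'
  have hV'ρ : ∀ h : ↥H, V'.ρ h = V.ρ (φ h) := fun h => rfl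
  have hVnt : Nontrivial V := GalAux.nontrivial_of_simple V
  have hVtriv : ∀ p : Submodule ℂ V, GalAux.Invt V p → p = ⊥ ∨ p = ⊤ :=
    GalAux.invt_trivial_of_simple V
  haveI hV's : Simple V' := by
    apply GalAux.simple_of_invt
    · exact hVnt
    · intro p hp
      apply hVtriv
      intro h x hx
      have := hp (φ.symm h) x hx
      rwa [hV'ρ, MulEquiv.apply_symm_apply] at this
  have hV'char : V'.character = V.character := by
    funext h
    show LinearMap.trace ℂ _ (V'.ρ h) = _
    rw [hV'ρ]
    have : V.character (φ h) = V.character h := by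
      rw [← hVθ]; exact hθφ h
    exact this
  -- the isomorphism V' ≅ V from character orthogonality
  haveI : Fintype ↥H := Fintype.ofFinite ↥H
  haveI : Fintype ↥H := inferInstanceAs (Fintype ↥H)
  haveI : Invertible ((Fintype.card ↥H : ℂ)) :=
    invertibleOfNonzero (Nat.cast_ne_zero.mpr Fintype.card_ne_zero)
  have hiso : Nonempty (V' ≅ V) := by
    have h1 := FDRep.char_orthonormal (G := ↥H) V' V
    have h2 := FDRep.char_orthonormal (G := ↥H) V V
    rw [hV'char] at h1
    rw [h1] at h2
    rw [if_pos (⟨Iso.refl V⟩ : Nonempty (V ≅ V))] at h2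
    by_contra hne
    rw [if_neg hne] at h2
    norm_num at h2
  obtain ⟨i⟩ := hiso
  set T := FDRep.isoToLinearEquiv i with hT
  have hTrel : ∀ (h : ↥H) (x : V), T.symm (V.ρ h x) = V.ρ (φ h) (T.symm x) := by
    intro h x
    have := FDRep.Iso.conj_ρ i h
    rw [hV'ρ] at this
    have h2 := congrFun (congrArg (fun (f : V →ₗ[ℂ] V) => (f : V → V)) this) x
    simp only [LinearEquiv.conj_apply, LinearMap.coe_comp, Function.comp_apply,
      LinearEquiv.coe_coe] at h2
    rw [h2, T.symm_apply_apply]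
  -- Step 6 : units and conjugation relations
  set ρu := Representation.asGroupHom V.ρ with hρudef
  have hρu : ∀ h : ↥H, ((ρu h : _) : _ →ₗ[ℂ] _) = V.ρ h := fun h =>
    Representation.asGroupHom_apply V.ρ h
  set a : (V →ₗ[ℂ] V)ˣ :=
    { val := T.symm.toLinearMap
      inv := T.toLinearMap
      val_inv := by ext x; exact T.symm_apply_apply x
      inv_val := by ext x; exact T.apply_symm_apply x } with hadef
  have hR1 : ∀ h : ↥H, a * ρu h = ρu (φ h) * a := by
    intro h
    apply Units.ext
    rw [Units.val_mul, Units.val_mul, hρu, hρu]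
    ext x
    exact hTrel h x
  have hccmem : ∀ (n : ℤ) (h : ↥H), g₀ ^ n * ↑h * (g₀ ^ n)⁻¹ ∈ H := fun n h =>
    hH.conj_mem _ h.2 _
  set cc : ℤ → ↥H → ↥H := fun n h => ⟨g₀ ^ n * ↑h * (g₀ ^ n)⁻¹, hccmem n h⟩ with hccdef
  have hR2 : ∀ u : (V →ₗ[ℂ] V)ˣ, (∀ h : ↥H, u * ρu h = ρu (φ h) * u) →
      ∀ (n : ℤ) (h : ↥H), u ^ n * ρu h = ρu (cc n h) * u ^ n := by
    intro u hu n
    induction n using Int.induction_on with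
    | zero =>
      intro h
      have hc0 : cc 0 h = h := Subtype.ext (by simp [cc])
      rw [hc0, zpow_zero, one_mul, mul_one]
    | succ n ih =>
      intro h
      have h1 : u ^ ((n : ℤ) + 1) = u ^ (n : ℤ) * u := zpow_add_one u n
      have h2 : cc n (φ h) = cc ((n : ℤ) + 1) h := by
        apply Subtype.ext
        show g₀ ^ (n : ℤ) * ↑(φ h) * (g₀ ^ (n : ℤ))⁻¹ = _
        rw [hφcoe h]
        show _ = g₀ ^ ((n : ℤ) + 1) * ↑h * (g₀ ^ ((n : ℤ) + 1))⁻¹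
        rw [zpow_add_one]
        group
      rw [h1, mul_assoc, hu h, ← mul_assoc, ih (φ h), h2, mul_assoc]
    | pred n ih =>
      intro h
      have hu' : ∀ h : ↥H, u⁻¹ * ρu h = ρu (φ.symm h) * u⁻¹ := by
        intro h
        have h3 := hu (φ.symm h)
        rw [MulEquiv.apply_symm_apply] at h3
        calc u⁻¹ * ρu h = u⁻¹ * (ρu h * u) * u⁻¹ := by group
        _ = u⁻¹ * (u * ρu (φ.symm h)) * u⁻¹ := by rw [h3]
        _ = ρu (φ.symm h) * u⁻¹ := by group
      have h1 : u ^ (-(n : ℤ) - 1) = u ^ (-(n : ℤ)) * u⁻¹ := zpow_sub_one u (-n)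
      have h2 : cc (-(n : ℤ)) (φ.symm h) = cc (-(n : ℤ) - 1) h := by
        apply Subtype.ext
        show g₀ ^ (-(n : ℤ)) * ↑(φ.symm h) * (g₀ ^ (-(n : ℤ)))⁻¹ = _
        rw [show ((φ.symm h : ↥H) : G) = g₀⁻¹ * ↑h * g₀ from MulAut.conjNormal_symm_apply g₀ h]
        show _ = g₀ ^ (-(n : ℤ) - 1) * ↑h * (g₀ ^ (-(n : ℤ) - 1))⁻¹
        rw [zpow_sub_one]
        group
      rw [h1, mul_assoc, hu' h, ← mul_assoc, ih (φ.symm h), h2, mul_assoc]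
  -- Step 7 : the scalar correction
  have hgqmem : g₀ ^ (q : ℤ) ∈ H := (hmem q).mpr dvd_rfl
  set gq : ↥H := ⟨g₀ ^ (q : ℤ), hgqmem⟩ with hgqdef
  have hccq : ∀ h : ↥H, cc (q : ℤ) h = gq * h * gq⁻¹ := by
    intro h
    apply Subtype.ext
    simp [hccdef, hgqdef]
  set S := (ρu gq)⁻¹ * a ^ q with hSdef
  have haq : a ^ q = ρu gq * S := by rw [hSdef]; group
  have hScomm : ∀ h : ↥H, S * ρu h = ρu h * S := by
    intro h
    have h1 := hR2 a hR1 (q : ℤ) h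
    rw [zpow_natCast] at h1
    calc S * ρu h = (ρu gq)⁻¹ * (a ^ q * ρu h) := by rw [hSdef]; group
    _ = (ρu gq)⁻¹ * (ρu (cc (q : ℤ) h) * a ^ q) := by rw [h1]
    _ = (ρu gq)⁻¹ * (ρu gq * ρu h * (ρu gq)⁻¹ * a ^ q) := by
        rw [hccq h, map_mul, map_mul, map_inv]
    _ = ρu h * S := by rw [hSdef]; group
  obtain ⟨c, hc⟩ := GalAux.scalar_of_commute V hVnt hVtriv (S : V →ₗ[ℂ] V) (by
    intro h
    have h2 := congrArg Units.val (hScomm h)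
    rw [Units.val_mul, Units.val_mul, hρu] at h2
    exact h2)
  have hc0 : c ≠ 0 := by
    intro h0
    rw [h0, zero_smul] at hc
    have h2 : (S : V →ₗ[ℂ] V) * ((S⁻¹ : (V →ₗ[ℂ] V)ˣ) : V →ₗ[ℂ] V) = 1 :=
      Units.mul_inv S
    rw [hc, zero_mul] at h2
    obtain ⟨x, hx⟩ := exists_ne (0 : V)
    have h3 := LinearMap.ext_iff.mp h2 x
    simp at h3
    exact hx h3.symm
  obtain ⟨μ, hμq⟩ := IsAlgClosed.exists_pow_nat_eq (k := ℂ) c⁻¹ hq.pos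
  have hμ0 : μ ≠ 0 := by
    intro h0
    rw [h0, zero_pow hq.pos.ne'] at hμq
    exact hc0 (by rwa [eq_comm, inv_eq_zero] at hμq)
  set su : (V →ₗ[ℂ] V)ˣ :=
    { val := μ • (1 : V →ₗ[ℂ] V)
      inv := μ⁻¹ • (1 : V →ₗ[ℂ] V)
      val_inv := by
        ext x
        simp [Module.End.mul_apply, smul_smul, mul_inv_cancel₀ hμ0, inv_mul_cancel₀ hμ0]
      inv_val := by
        ext x
        simp [Module.End.mul_apply, smul_smul, mul_inv_cancel₀ hμ0, inv_mul_cancel₀ hμ0] } with hsudef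
  have hsuval : (su : V →ₗ[ℂ] V) = μ • 1 := rfl
  have hsucentral : ∀ u : (V →ₗ[ℂ] V)ˣ, su * u = u * su := by
    intro u
    apply Units.ext
    rw [Units.val_mul, Units.val_mul, hsuval]
    ext x
    simp [Module.End.mul_apply]
  set b := su * a with hbdef
  have hbR1 : ∀ h : ↥H, b * ρu h = ρu (φ h) * b := by
    intro h
    calc su * a * ρu h = su * (a * ρu h) := by rw [mul_assoc]
    _ = su * (ρu (φ h) * a) := by rw [hR1 h]
    _ = (su * ρu (φ h)) * a := by rw [mul_assoc]
    _ = (ρu (φ h) * su) * a := by rw [hsucentral]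
    _ = ρu (φ h) * b := by rw [hbdef, mul_assoc]
  have hbq : b ^ q = ρu gq := by
    have hcomm_sa : Commute su a := hsucentral a
    have h1 : b ^ q = su ^ q * a ^ q := hcomm_sa.mul_pow q
    rw [h1, haq]
    apply Units.ext
    rw [Units.val_mul, Units.val_mul, Units.val_pow_eq_pow_val, hsuval, hc]
    ext x
    simp [Module.End.mul_apply, smul_pow, LinearMap.smul_apply, smul_smul]
    rw [hμq, mul_comm c, inv_mul_cancel₀ hc0, one_smul]
  have hbpow : ∀ (m : ℤ), (q : ℤ) ∣ m → ∀ hm : g₀ ^ m ∈ H, b ^ m = ρu ⟨g₀ ^ m, hm⟩ := by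
    rintro m ⟨n, rfl⟩ hm
    have h1 : b ^ ((q : ℤ) * n) = (b ^ (q : ℤ)) ^ n := zpow_mul b q n
    rw [h1, zpow_natCast, hbq, ← map_zpow]
    congr 1
    apply Subtype.ext
    rw [SubgroupClass.coe_zpow]
    exact (zpow_mul g₀ q n).symm
  -- Step 8 : the extended map σ
  set ind : G → ℤ := fun x => Classical.choose (hdecomp x) with hinddef
  have hindspec : ∀ x : G, (g₀ ^ ind x)⁻¹ * x ∈ H := fun x => Classical.choose_spec (hdecomp x)
  set σ : G → (V →ₗ[ℂ] V)ˣ :=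
    fun x => b ^ ind x * ρu ⟨(g₀ ^ ind x)⁻¹ * x, hindspec x⟩ with hσdef
  have hLwd : ∀ (x : G) (i : ℤ) (hx : (g₀ ^ i)⁻¹ * x ∈ H),
      σ x = b ^ i * ρu ⟨(g₀ ^ i)⁻¹ * x, hx⟩ := by
    intro x i hx
    set j := ind x with hjdef
    have hdvd : (q : ℤ) ∣ j - i := by
      rw [← hmem]
      have h1 : g₀ ^ (j - i) = ((g₀ ^ i)⁻¹ * x) * ((g₀ ^ j)⁻¹ * x)⁻¹ := by
        rw [zpow_sub]
        group
      rw [h1]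
      exact H.mul_mem hx (H.inv_mem (hindspec x))
    have hmm : g₀ ^ (j - i) ∈ H := (hmem _).mpr hdvd
    have h2 : b ^ (j - i) = ρu ⟨g₀ ^ (j - i), hmm⟩ := hbpow _ hdvd hmm
    have h3 : b ^ j = b ^ i * b ^ (j - i) := by
      rw [← zpow_add]
      congr 1
      ring
    have h4 : (⟨g₀ ^ (j - i), hmm⟩ : ↥H) * ⟨(g₀ ^ j)⁻¹ * x, hindspec x⟩
        = ⟨(g₀ ^ i)⁻¹ * x, hx⟩ := by
      apply Subtype.ext
      show g₀ ^ (j - i) * ((g₀ ^ j)⁻¹ * x) = (g₀ ^ i)⁻¹ * x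
      rw [zpow_sub]
      group
    rw [hσdef]
    show b ^ j * ρu ⟨(g₀ ^ j)⁻¹ * x, hindspec x⟩ = _
    rw [h3, mul_assoc, h2, ← map_mul, h4]
  have hσmul : ∀ x y : G, σ (x * y) = σ x * σ y := by
    intro x y
    set i := ind x
    set j := ind y
    have hx : (g₀ ^ i)⁻¹ * x ∈ H := hindspec x
    have hy : (g₀ ^ j)⁻¹ * y ∈ H := hindspec y
    have hconjmem : g₀ ^ (-j) * ((g₀ ^ i)⁻¹ * x) * (g₀ ^ (-j))⁻¹ ∈ H := hH.conj_mem _ hx _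
    have hxy : (g₀ ^ (i + j))⁻¹ * (x * y) ∈ H := by
      have heq : (g₀ ^ (i + j))⁻¹ * (x * y)
          = (g₀ ^ (-j) * ((g₀ ^ i)⁻¹ * x) * (g₀ ^ (-j))⁻¹) * ((g₀ ^ j)⁻¹ * y) := by
        rw [zpow_add, zpow_neg]
        group
      rw [heq]
      exact H.mul_mem hconjmem hy
    rw [hLwd (x * y) (i + j) hxy]
    have h5 : (⟨(g₀ ^ (i + j))⁻¹ * (x * y), hxy⟩ : ↥H)
        = (⟨g₀ ^ (-j) * ((g₀ ^ i)⁻¹ * x) * (g₀ ^ (-j))⁻¹, hconjmem⟩ : ↥H)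
          * ⟨(g₀ ^ j)⁻¹ * y, hy⟩ := by
      apply Subtype.ext
      show (g₀ ^ (i + j))⁻¹ * (x * y) = g₀ ^ (-j) * ((g₀ ^ i)⁻¹ * x) * (g₀ ^ (-j))⁻¹ * ((g₀ ^ j)⁻¹ * y)
      rw [zpow_add, zpow_neg]
      group
    have h6 : cc j (⟨g₀ ^ (-j) * ((g₀ ^ i)⁻¹ * x) * (g₀ ^ (-j))⁻¹, hconjmem⟩ : ↥H)
        = ⟨(g₀ ^ i)⁻¹ * x, hx⟩ := by
      apply Subtype.ext
      show g₀ ^ j * (g₀ ^ (-j) * ((g₀ ^ i)⁻¹ * x) * (g₀ ^ (-j))⁻¹) * (g₀ ^ j)⁻¹ = (g₀ ^ i)⁻¹ * x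
      rw [zpow_neg]
      group
    have h7 := hR2 b hbR1 j (⟨g₀ ^ (-j) * ((g₀ ^ i)⁻¹ * x) * (g₀ ^ (-j))⁻¹, hconjmem⟩ : ↥H)
    rw [h6] at h7
    calc b ^ (i + j) * ρu (⟨(g₀ ^ (i + j))⁻¹ * (x * y), hxy⟩ : ↥H)
        = b ^ i * (b ^ j * ρu (⟨g₀ ^ (-j) * ((g₀ ^ i)⁻¹ * x) * (g₀ ^ (-j))⁻¹, hconjmem⟩ : ↥H))
          * ρu ⟨(g₀ ^ j)⁻¹ * y, hy⟩ := by
          rw [h5, map_mul, zpow_add]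
          group
    _ = b ^ i * (ρu ⟨(g₀ ^ i)⁻¹ * x, hx⟩ * b ^ j) * ρu ⟨(g₀ ^ j)⁻¹ * y, hy⟩ := by rw [h7]
    _ = σ x * σ y := by
          rw [hσdef]
          group
          rfl
  have hσH : ∀ h : ↥H, σ ↑h = ρu h := by
    intro h
    have hmem0 : (g₀ ^ (0 : ℤ))⁻¹ * ↑h ∈ H := by
      simp only [zpow_zero, inv_one, one_mul]
      exact h.2
    rw [hLwd ↑h 0 hmem0, zpow_zero, one_mul]
    congr 1
    apply Subtype.ext
    simp
  -- Step 9 : assembling the representation of G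
  set σ' : G →* (V →ₗ[ℂ] V)ˣ := MonoidHom.mk' σ hσmul with hσ'def
  set ω : Representation ℂ G V := (Units.coeHom (V →ₗ[ℂ] V)).comp σ' with hωdef
  set W : FDRep ℂ G := FDRep.of ω with hWdef
  have hWρ : ∀ x : G, W.ρ x = (σ x : V →ₗ[ℂ] V) := fun x => rfl
  have hWρH : ∀ h : ↥H, W.ρ (h : G) = V.ρ h := by
    intro h
    rw [hWρ, hσH, hρu]
  haveI hWs : Simple W := by
    apply GalAux.simple_of_invt
    · exact hVnt
    · intro p hp
      apply hVtriv
      intro h x hx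
      have := hp (h : G) x hx
      rwa [hWρH] at this
  refine ⟨W.character, ⟨W, hWs, rfl⟩, ?_⟩
  funext h
  show LinearMap.trace ℂ _ (W.ρ (h : G)) = θ h
  rw [hWρH, hVθ]
  rfl
end

section
/- Let G be a finite group, H a normal subgroup of G, and suppose θ is an irreducible complex character of H that extends to an irreducible complex character χ of G (i.e. Res_H^G χ = θ). Then for every irreducible complex character β of the quotient group G/H, the product character g ↦ χ(g)·β(gH) is an irreducible complex character of G. -/
open scoped BigOperators ComplexOrder

/- ### Auxiliary machinery for Gallagher's theorem -/

noncomputable section GallagherAux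
open CategoryTheory Representation Module LinearMap

namespace Gallagher

variable {K : Type} [Group K]

lemma averageChar [Fintype K] [Invertible (Fintype.card K : ℂ)] (A : FDRep ℂ K) :
    ⅟(Fintype.card K : ℂ) • ∑ g : K, A.character g⁻¹ * A.character g
      = (finrank ℂ (invariants (linHom A.ρ A.ρ)) : ℂ) := by
  have h := FDRep.average_char_eq_finrank_invariants (FDRep.of (linHom A.ρ A.ρ))
  simp only [FDRep.char_linHom, FDRep.of_ρ] at h
  rw [FDRep.of_ρ', Nat.card_eq_fintype_card] at h
  rw [smul_eq_mul, invOf_eq_inv]; exact h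

lemma finrank_End_of_simple [Fintype K] (A : FDRep ℂ K) [Simple A] :
    finrank ℂ (invariants (linHom A.ρ A.ρ)) = 1 := by
  rw [(Representation.linHom.invariantsEquivFDRepHom A A).finrank_eq]
  exact CategoryTheory.finrank_endomorphism_simple_eq_one ℂ A

lemma finrank_invariants_of_char_eq [Fintype K] {A B : FDRep ℂ K} [Simple B]
    (h : A.character = B.character) :
    finrank ℂ (invariants (linHom A.ρ A.ρ)) = 1 := by
  letI : Invertible (Fintype.card K : ℂ) :=
    invertibleOfNonzero (Nat.cast_ne_zero.mpr Fintype.card_ne_zero)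
  have hA := averageChar A
  have hB := averageChar B
  rw [h] at hA
  have hAB : ((finrank ℂ (invariants (linHom A.ρ A.ρ))) : ℂ)
      = ((finrank ℂ (invariants (linHom B.ρ B.ρ))) : ℂ) := by rw [← hA, ← hB]
  rw [finrank_End_of_simple B] at hAB
  exact_mod_cast hAB

lemma sum_self_char_of_simple [Fintype K] [Invertible (Fintype.card K : ℂ)] (A : FDRep ℂ K)
    [Simple A] :
    ∑ g : K, A.character g⁻¹ * A.character g = (Fintype.card K : ℂ) := by
  have h := averageChar A
  rw [finrank_End_of_simple A, Nat.cast_one] at h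
  calc ∑ g : K, A.character g⁻¹ * A.character g
      = (Fintype.card K : ℂ) • (⅟(Fintype.card K : ℂ) •
          ∑ g : K, A.character g⁻¹ * A.character g) := (smul_invOf_smul _ _).symm
    _ = (Fintype.card K : ℂ) := by rw [h, smul_eq_mul, mul_one]

variable {G : Type} [Group G]

/-- Decomposition of a group into cosets of a subgroup using `Quotient.out`. -/
def cosetEquiv (H : Subgroup G) : (G ⧸ H) × ↥H ≃ G where
  toFun p := p.1.out * ↑p.2
  invFun g := (QuotientGroup.mk g,
    ⟨((QuotientGroup.mk g : G ⧸ H)).out⁻¹ * g,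
      QuotientGroup.eq.mp (QuotientGroup.out_eq' (QuotientGroup.mk g))⟩)
  left_inv := by
    rintro ⟨q, h⟩
    have hmk : (QuotientGroup.mk (q.out * ↑h) : G ⧸ H) = q := by
      rw [QuotientGroup.mk_mul_of_mem _ h.2, QuotientGroup.out_eq']
    refine Prod.ext (by simp only [hmk]) (Subtype.ext ?_)
    show (QuotientGroup.mk (q.out * ↑h) : G ⧸ H).out⁻¹ * (q.out * ↑h) = ↑h
    rw [hmk, inv_mul_cancel_left]
  right_inv g := by
    show (QuotientGroup.mk g : G ⧸ H).out * ((QuotientGroup.mk g : G ⧸ H).out⁻¹ * g) = g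
    rw [mul_inv_cancel_left]

lemma mk_cosetEquiv (H : Subgroup G) (q : G ⧸ H) (h : ↥H) :
    (QuotientGroup.mk (cosetEquiv H (q, h)) : G ⧸ H) = q := by
  show (QuotientGroup.mk (q.out * ↑h) : G ⧸ H) = q
  rw [QuotientGroup.mk_mul_of_mem _ h.2, QuotientGroup.out_eq']

lemma linHom_id_invariant {K Vv : Type} [Group K] [AddCommGroup Vv] [Module ℂ Vv]
    (ρ : Representation ℂ K Vv) :
    (LinearMap.id : Vv →ₗ[ℂ] Vv) ∈ invariants (linHom ρ ρ) := by
  intro g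
  rw [linHom_apply, LinearMap.id_comp, ← Module.End.mul_eq_comp, ← map_mul, mul_inv_cancel,
    map_one]
  rfl

lemma nontrivial_of_finrank_invariants {K Vv : Type} [Group K] [AddCommGroup Vv] [Module ℂ Vv]
    {σ : Representation ℂ K (Vv →ₗ[ℂ] Vv)}
    (h1 : finrank ℂ (invariants σ) = 1) : Nontrivial Vv := by
  by_contra hn
  rw [not_nontrivial_iff_subsingleton] at hn
  haveI : Subsingleton (Vv →ₗ[ℂ] Vv) := by infer_instance
  haveI : Subsingleton (invariants σ) := by infer_instance
  rw [finrank_zero_of_subsingleton] at h1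
  exact one_ne_zero h1.symm

lemma invariants_eq_span {K Vv : Type} [Group K] [AddCommGroup Vv] [Module ℂ Vv]
    {σ : Representation ℂ K (Vv →ₗ[ℂ] Vv)} [FiniteDimensional ℂ Vv]
    (hid : (LinearMap.id : Vv →ₗ[ℂ] Vv) ∈ invariants σ)
    (h1 : finrank ℂ (invariants σ) = 1) :
    invariants σ = ℂ ∙ (LinearMap.id : Vv →ₗ[ℂ] Vv) := by
  haveI : Nontrivial Vv := nontrivial_of_finrank_invariants h1
  have hne : (LinearMap.id : Vv →ₗ[ℂ] Vv) ≠ 0 := by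
    obtain ⟨x, hx⟩ := exists_ne (0 : Vv)
    intro h
    exact hx (by simpa using DFunLike.congr_fun h x)
  have hle : (ℂ ∙ (LinearMap.id : Vv →ₗ[ℂ] Vv)) ≤ invariants σ :=
    (Submodule.span_singleton_le_iff_mem _ _).2 hid
  exact (Submodule.eq_of_le_of_finrank_le hle
    (by rw [h1, finrank_span_singleton hne])).symm

/-- **Gallagher's counting lemma**: if the restriction of `V` to `H` has scalar
`H`-endomorphism algebra, then on every coset of `H` the sum of `|character|²` is `|H|`. -/
lemma sum_coset [Fintype G] (H : Subgroup G) [Fintype ↥H] [Invertible ((Fintype.card ↥H : ℂ))]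
    (V : FDRep ℂ G)
    (h1 : finrank ℂ (invariants (linHom (V.ρ.comp H.subtype) (V.ρ.comp H.subtype))) = 1)
    (x : G) :
    ∑ h : ↥H, V.character ((x * ↑h)⁻¹) * V.character (x * ↑h) = (Fintype.card ↥H : ℂ) := by
  set σ : Representation ℂ G (V →ₗ[ℂ] V) := linHom V.ρ V.ρ with hσ
  set τ : Representation ℂ ↥H (V →ₗ[ℂ] V) := σ.comp H.subtype with hτ
  have hττ : τ = linHom (V.ρ.comp H.subtype) (V.ρ.comp H.subtype) := by
    refine MonoidHom.ext fun h => LinearMap.ext fun f => ?_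
    simp [hτ, hσ, linHom_apply]
  have hid : (LinearMap.id : V →ₗ[ℂ] V) ∈ invariants τ := by
    rw [hττ]; exact linHom_id_invariant _
  have hspan : invariants τ = ℂ ∙ (LinearMap.id : V →ₗ[ℂ] V) := by
    rw [hττ] at hid ⊢
    exact invariants_eq_span hid (by rw [← hττ] at h1 ⊢; rw [hττ]; exact h1)
  have hfix : ∀ f ∈ invariants τ, σ x f = f := by
    intro f hf
    rw [hspan, Submodule.mem_span_singleton] at hf
    obtain ⟨c, rfl⟩ := hf
    rw [map_smul]
    congr 1
    exact linHom_id_invariant V.ρ x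
  have hterm : ∀ h : ↥H, V.character ((x * ↑h)⁻¹) * V.character (x * ↑h)
      = LinearMap.trace ℂ _ (σ (x * ↑h)) := by
    intro h
    rw [← FDRep.char_linHom]
    rfl
  rw [Finset.sum_congr rfl fun h _ => hterm h, ← map_sum]
  have havg : averageMap τ = ⅟(Fintype.card ↥H : ℂ) • ∑ h : ↥H, τ h := by
    rw [averageMap, GroupAlgebra.average, map_smul, map_sum]
    simp only [MonoidAlgebra.of_apply, asAlgebraHom_single_one]
  have hsum2 : ∑ h : ↥H, τ h = (Fintype.card ↥H : ℂ) • averageMap τ := by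
    rw [havg, smul_invOf_smul]
  have hsum : ∑ h : ↥H, σ (x * ↑h) = (Fintype.card ↥H : ℂ) • (σ x * averageMap τ) := by
    calc ∑ h : ↥H, σ (x * ↑h) = ∑ h : ↥H, σ x * τ h := by
          refine Finset.sum_congr rfl fun h _ => ?_
          rw [map_mul σ x ↑h]; rfl
      _ = σ x * ∑ h : ↥H, τ h := by rw [Finset.mul_sum]
      _ = (Fintype.card ↥H : ℂ) • (σ x * averageMap τ) := by rw [hsum2, mul_smul_comm]
  have hproj : σ x * averageMap τ = averageMap τ :=
    LinearMap.ext fun f => hfix _ (averageMap_invariant τ f)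
  rw [hsum, hproj, map_smul, (isProj_averageMap τ).trace, hττ, ← hττ]
  rw [hττ] at *
  rw [h1]
  simp

/-- Restriction of a representation to an invariant submodule. -/
def subRep {Vv : Type} [AddCommGroup Vv] [Module ℂ Vv] (ρ : Representation ℂ G Vv)
    (p : Submodule ℂ Vv) (hp : ∀ (g : G) (x : Vv), x ∈ p → ρ g x ∈ p) :
    Representation ℂ G p where
  toFun g := LinearMap.restrict (ρ g) (fun x hx => hp g x hx)
  map_one' := by ext x; simp [LinearMap.restrict_apply]
  map_mul' g₁ g₂ := by ext x; simp [LinearMap.restrict_apply]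

/-- The inclusion of a subrepresentation as a morphism of `FDRep`s. -/
def subRepIncl (Y : FDRep ℂ G) (p : Submodule ℂ Y) (hp : ∀ (g : G) (x : ↥Y), x ∈ p → Y.ρ g x ∈ p) :
    FDRep.of (subRep Y.ρ p hp) ⟶ Y where
  hom := FGModuleCat.ofHom p.subtype
  comm g := by ext x; rfl

lemma fdRep_hom_comm {X Y : FDRep ℂ G} (f : X ⟶ Y) (g : G) (x : X) :
    f.hom.hom.hom (X.ρ g x)
      = Y.ρ g (f.hom.hom.hom x) := by
  exact LinearMap.congr_fun (congrArg (fun φ => φ.hom.hom) (f.comm g)) x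

/-- A finite-dimensional representation over `ℂ` whose equivariant endomorphism algebra is
one-dimensional is irreducible.  (This uses Maschke-type averaging and Schur's lemma.) -/
lemma simple_of_finrank_invariants_eq_one [Fintype G] (X : FDRep ℂ G)
    (h1 : finrank ℂ (invariants (linHom X.ρ X.ρ)) = 1) : Simple X := by
  have hnt : Nontrivial X := nontrivial_of_finrank_invariants h1
  have hid : (LinearMap.id : (X : Type) →ₗ[ℂ] X) ∈ invariants (linHom X.ρ X.ρ) :=
    linHom_id_invariant X.ρ
  have hspan : invariants (linHom X.ρ X.ρ) = ℂ ∙ (LinearMap.id : (X : Type) →ₗ[ℂ] X) :=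
    invariants_eq_span hid h1
  have hscalar : ∀ e : (X : Type) →ₗ[ℂ] X, (∀ g : G, X.ρ g ∘ₗ e ∘ₗ X.ρ g⁻¹ = e) →
      ∃ c : ℂ, e = c • LinearMap.id := by
    intro e he
    have : e ∈ invariants (linHom X.ρ X.ρ) := by
      intro g; rw [linHom_apply]; exact he g
    rw [hspan, Submodule.mem_span_singleton] at this
    obtain ⟨c, hc⟩ := this
    exact ⟨c, hc.symm⟩
  constructor
  intro Y f hm
  constructor
  · -- IsIso f → f ≠ 0
    intro hiso h0
    subst h0
    have : 𝟙 X = (0 : X ⟶ X) := by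
      rw [← IsIso.inv_hom_id (0 : Y ⟶ X), Limits.comp_zero]
    obtain ⟨x, hx⟩ := exists_ne (0 : X)
    have hx2 : (𝟙 X : X ⟶ X).hom.hom.hom x = ((0 : X ⟶ X)).hom.hom.hom x := by rw [this]
    exact hx hx2
  · -- f ≠ 0 → IsIso f
    intro hf0
    have hfhom : f.hom.hom.hom ≠ 0 := fun h => hf0 (Action.hom_ext _ _ (by ext y; exact LinearMap.congr_fun h y))
    have hker : ∀ (g : G) (y : Y), y ∈ LinearMap.ker f.hom.hom.hom → Y.ρ g y ∈ LinearMap.ker f.hom.hom.hom := by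
      intro g y hy
      rw [LinearMap.mem_ker] at hy ⊢
      exact (fdRep_hom_comm f g y).trans
        (by rw [show f.hom.hom.hom y = 0 from hy, map_zero])
    have hι : subRepIncl Y _ hker ≫ f = 0 := by
      apply Action.hom_ext
      rw [Action.comp_hom, Action.zero_hom]
      ext x
      exact x.2
    rw [Preadditive.mono_iff_cancel_zero] at hm
    have hι0 := hm _ (subRepIncl Y _ hker) hι
    have hinj : Function.Injective f.hom.hom.hom := by
      rw [← LinearMap.ker_eq_bot]
      rw [Submodule.eq_bot_iff]
      intro y hy
      have h3 : (subRepIncl Y _ hker).hom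
          = (0 : FDRep.of (subRep Y.ρ _ hker) ⟶ Y).hom := by rw [hι0]
      rw [Action.zero_hom] at h3
      calc y = (subRepIncl Y _ hker).hom.hom.hom ⟨y, hy⟩ := rfl
        _ = 0 := by rw [h3]; rfl
    set p : Submodule ℂ X := LinearMap.range f.hom.hom.hom with hpdef
    have hp : ∀ (g : G) (x : (X : Type)), x ∈ p → X.ρ g x ∈ p := by
      rintro g x ⟨y, rfl⟩
      exact ⟨Y.ρ g y, (fdRep_hom_comm f g y)⟩
    have hpne : ∃ v ∈ p, v ≠ (0 : X) := by
      by_contra hcon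
      push_neg at hcon
      exact hfhom (LinearMap.ext fun y => hcon _ ⟨y, rfl⟩)
    obtain ⟨q, hq⟩ := Submodule.exists_isCompl p
    set π : (X : Type) →ₗ[ℂ] X := p.subtype ∘ₗ p.linearProjOfIsCompl q hq with hπdef
    have hπ_mem : ∀ x : X, π x ∈ p := fun x => (p.linearProjOfIsCompl q hq x).2
    have hπ_fix : ∀ x ∈ p, π x = x := by
      intro x hx
      rw [hπdef, LinearMap.comp_apply]
      exact congrArg Subtype.val (Submodule.linearProjOfIsCompl_apply_left hq ⟨x, hx⟩)
    letI : Invertible (Fintype.card G : ℂ) :=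
      invertibleOfNonzero (Nat.cast_ne_zero.mpr Fintype.card_ne_zero)
    set e : (X : Type) →ₗ[ℂ] X :=
      ⅟(Fintype.card G : ℂ) • ∑ g : G, X.ρ g ∘ₗ π ∘ₗ X.ρ g⁻¹ with hedef
    have he_apply : ∀ x : X, e x = ⅟(Fintype.card G : ℂ) • ∑ g : G, X.ρ g (π (X.ρ g⁻¹ x)) := by
      intro x
      rw [hedef]
      simp [LinearMap.sum_apply]
    have he_mem : ∀ x : X, e x ∈ p := by
      intro x
      rw [he_apply]
      exact Submodule.smul_mem _ _ (Submodule.sum_mem _ fun g _ => hp g _ (hπ_mem _))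
    have he_fix : ∀ x ∈ p, e x = x := by
      intro x hx
      rw [he_apply]
      have hterm : ∀ g : G, X.ρ g (π (X.ρ g⁻¹ x)) = x := by
        intro g
        have h1 : X.ρ g⁻¹ x ∈ p := hp g⁻¹ x hx
        rw [hπ_fix _ h1, ← Module.End.mul_apply, ← map_mul, mul_inv_cancel, map_one,
          Module.End.one_apply]
      rw [Finset.sum_congr rfl fun g _ => hterm g, Finset.sum_const, Finset.card_univ,
        ← Nat.cast_smul_eq_nsmul ℂ, invOf_smul_smul]
    have he_equiv : ∀ s : G, X.ρ s ∘ₗ e ∘ₗ X.ρ s⁻¹ = e := by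
      intro s
      refine LinearMap.ext fun x => ?_
      have lhs : (X.ρ s ∘ₗ e ∘ₗ X.ρ s⁻¹) x
          = ⅟(Fintype.card G : ℂ) • ∑ g : G, X.ρ (s * g) (π (X.ρ (s * g)⁻¹ x)) := by
        simp only [LinearMap.comp_apply, he_apply, map_smul, map_sum]
        congr 1
        refine Finset.sum_congr rfl fun g _ => ?_
        rw [← LinearMap.comp_apply, ← Module.End.mul_eq_comp, ← map_mul]
        congr 2
        rw [← LinearMap.comp_apply, ← Module.End.mul_eq_comp, ← map_mul]
        congr 2
        group
      rw [lhs, he_apply]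
      congr 1
      exact Fintype.sum_equiv (Equiv.mulLeft s) _ _ fun g => rfl
    obtain ⟨c, hc⟩ := hscalar e (fun g => he_equiv g)
    obtain ⟨v, hv, hvne⟩ := hpne
    have hc1 : c = 1 := by
      have h1 : e v = v := he_fix v hv
      rw [hc] at h1
      simp only [LinearMap.smul_apply, LinearMap.id_apply] at h1
      have h2 : (c - 1) • v = 0 := by rw [sub_smul, one_smul, h1, sub_self]
      rcases smul_eq_zero.mp h2 with h | h
      · exact sub_eq_zero.mp h
      · exact absurd h hvne
    have hsurj : Function.Surjective f.hom.hom.hom := by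
      intro x
      have hex : e x = x := by rw [hc, hc1]; simp
      exact hex ▸ he_mem x
    set E := LinearEquiv.ofBijective f.hom.hom.hom ⟨hinj, hsurj⟩ with hE
    refine ⟨⟨⟨FGModuleCat.ofHom E.symm.toLinearMap, ?_⟩, ?_, ?_⟩⟩
    · intro g
      ext x
      apply hinj
      show f.hom.hom.hom (E.symm (X.ρ g x)) = f.hom.hom.hom (Y.ρ g (E.symm x))
      have h1 : f.hom.hom.hom (E.symm (X.ρ g x)) = X.ρ g x := E.apply_symm_apply _
      rw [h1, fdRep_hom_comm f g (E.symm x)]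
      congr 1
      exact (E.apply_symm_apply x).symm
    · apply Action.hom_ext
      rw [Action.comp_hom, Action.id_hom]
      ext y
      exact E.symm_apply_apply y
    · apply Action.hom_ext
      rw [Action.comp_hom, Action.id_hom]
      ext x
      exact E.apply_symm_apply x

end Gallagher

end GallagherAux

/-- **Gallagher.** If `θ ∈ Irr(H)` extends to `χ ∈ Irr(G)`, then for every
`β ∈ Irr(G/H)` the product `χ · β̃` (with `β̃` the lift of `β` to `G`) is an
irreducible character of `G`. -/
theorem isIrreducibleCharacter_mul_lift
    {G : Type} [Group G] [Fintype G] (H : Subgroup G) [hH : H.Normal]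
    (θ : ↥H → ℂ) (hθ : IsIrreducibleCharacter ↥H θ)
    (χ : G → ℂ) (hχ : IsIrreducibleCharacter G χ)
    (hres : (fun h : ↥H => χ (h : G)) = θ)
    (β : G ⧸ H → ℂ) (hβ : IsIrreducibleCharacter (G ⧸ H) β) :
    IsIrreducibleCharacter G (fun g : G => χ g * β (QuotientGroup.mk g)) := by
  classical
  open CategoryTheory Representation Module LinearMap MonoidalCategory Gallagher in
  · obtain ⟨Vθ, hVθs, hVθc⟩ := hθ
    obtain ⟨V, hVs, hVc⟩ := hχ
    obtain ⟨W, hWs, hWc⟩ := hβ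
    haveI := hVθs
    haveI := hVs
    haveI := hWs
    letI : Fintype ↥H := Fintype.ofFinite _
    letI : Fintype (G ⧸ H) := Fintype.ofFinite _
    letI : Invertible (Fintype.card G : ℂ) :=
      invertibleOfNonzero (Nat.cast_ne_zero.mpr Fintype.card_ne_zero)
    letI : Invertible (Fintype.card ↥H : ℂ) :=
      invertibleOfNonzero (Nat.cast_ne_zero.mpr Fintype.card_ne_zero)
    letI : Invertible (Fintype.card (G ⧸ H) : ℂ) :=
      invertibleOfNonzero (Nat.cast_ne_zero.mpr Fintype.card_ne_zero)
    -- the restriction of V to H has the same character as Vθ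
    set ρres : Representation ℂ ↥H V := V.ρ.comp H.subtype with hρres
    have hrchar : (FDRep.of ρres).character = Vθ.character := by
      funext h
      have h1 : (FDRep.of ρres).character h = V.character ↑h := rfl
      rw [h1, ← hVθc, ← congrFun hres h, hVc]
    have h1res : finrank ℂ (invariants (linHom ρres ρres)) = 1 := by
      have := finrank_invariants_of_char_eq (A := FDRep.of ρres) (B := Vθ) hrchar
      exact this
    -- the lift of W to G
    set Wl : FDRep ℂ G := FDRep.of (W.ρ.comp (QuotientGroup.mk' H)) with hWl
    have hWlc : ∀ g : G, Wl.character g = W.character (QuotientGroup.mk g) := fun g => rfl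
    set T : FDRep ℂ G := V ⊗ Wl with hTdef
    have hT : ∀ g : G, T.character g = V.character g * W.character (QuotientGroup.mk g) := by
      intro g
      rw [hTdef, FDRep.char_tensor, Pi.mul_apply, hWlc]
    -- the sum over the quotient
    have hQ : ∑ q : G ⧸ H, W.character q⁻¹ * W.character q = (Fintype.card (G ⧸ H) : ℂ) :=
      sum_self_char_of_simple W
    -- the main character computation
    have key : ∑ g : G, T.character g⁻¹ * T.character g = (Fintype.card G : ℂ) := by
      rw [← Equiv.sum_comp (cosetEquiv H) (fun g => T.character g⁻¹ * T.character g),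
        Fintype.sum_prod_type]
      have inner : ∀ q : G ⧸ H,
          ∑ h : ↥H, T.character ((cosetEquiv H (q, h))⁻¹) * T.character (cosetEquiv H (q, h))
            = (W.character q⁻¹ * W.character q) * (Fintype.card ↥H : ℂ) := by
        intro q
        have hterm : ∀ h : ↥H,
            T.character ((cosetEquiv H (q, h))⁻¹) * T.character (cosetEquiv H (q, h))
              = (W.character q⁻¹ * W.character q) *
                (V.character ((q.out * ↑h)⁻¹) * V.character (q.out * ↑h)) := by
          intro h
          have hmk : (QuotientGroup.mk (cosetEquiv H (q, h)) : G ⧸ H) = q := mk_cosetEquiv H q h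
          have hmkinv : (QuotientGroup.mk ((cosetEquiv H (q, h))⁻¹) : G ⧸ H) = q⁻¹ := by
            rw [QuotientGroup.mk_inv, hmk]
          rw [hT, hT, hmk, hmkinv]
          show (V.character ((q.out * ↑h)⁻¹) * W.character q⁻¹) *
              (V.character (q.out * ↑h) * W.character q) = _
          ring
        rw [Finset.sum_congr rfl fun h _ => hterm h, ← Finset.mul_sum,
          sum_coset H V h1res q.out]
      rw [Finset.sum_congr rfl fun q _ => inner q, ← Finset.sum_mul, hQ]
      have hcard : (Fintype.card G : ℂ)
          = (Fintype.card (G ⧸ H) : ℂ) * (Fintype.card ↥H : ℂ) := by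
        have := Subgroup.card_eq_card_quotient_mul_card_subgroup H
        simp only [Nat.card_eq_fintype_card] at this
        exact_mod_cast this
      rw [hcard]
    -- conclude irreducibility of T
    have hfin : finrank ℂ (invariants (linHom T.ρ T.ρ)) = 1 := by
      have h := averageChar T
      rw [key, smul_eq_mul, invOf_mul_self'] at h
      exact_mod_cast h.symm
    haveI : Simple T := simple_of_finrank_invariants_eq_one T hfin
    exact ⟨T, inferInstance, funext fun g => by rw [hT g, ← hVc, ← hWc]⟩
end
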